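/- Let D be a directed graph, let P be a directed path in D, and let Q be a directed a–b path in D for vertices a, b of D. Then there exists a directed a–b path Q' in D with Q' ⊆ P ∪ Q such that P and Q' are laced. -/

import Mathlib

/-!
Common definitions: directed graphs as vertex/edge sets, directed paths and
walks, rays, arborescences, tree-like models and butterfly minors, laced
paths, knit rays, and the shapes (dominated directed rays, stars, combs,
chains of triangles) from the paper.
-/

universe u

/-- A directed graph on an ambient vertex type `V`, given by a set of vertices
and a set of directed edges (ordered pairs of vertices). -/
structure DGraph (V : Type u) where
  verts : Set V
  edges : Set (V × V)

namespace DGraph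

variable {V : Type u}

instance : Union (DGraph V) := ⟨fun G H => ⟨G.verts ∪ H.verts, G.edges ∪ H.edges⟩⟩
instance : Inter (DGraph V) := ⟨fun G H => ⟨G.verts ∩ H.verts, G.edges ∩ H.edges⟩⟩
instance : HasSubset (DGraph V) := ⟨fun H G => H.verts ⊆ G.verts ∧ H.edges ⊆ G.edges⟩
instance : EmptyCollection (DGraph V) := ⟨⟨∅, ∅⟩⟩

/-- The union of a family of directed graphs. -/
def iUnion {ι : Type} (f : ι → DGraph V) : DGraph V :=
  ⟨⋃ i, (f i).verts, ⋃ i, (f i).edges⟩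

/-- The directed graph obtained by reversing the orientation of every edge. -/
def reverse (G : DGraph V) : DGraph V := ⟨G.verts, {e | (e.2, e.1) ∈ G.edges}⟩

/-- The directed graph consisting of a single vertex and no edges. -/
def single (v : V) : DGraph V := ⟨{v}, ∅⟩

/-- Two vertices joined by both directed edges. -/
def linkBoth (a b : V) : DGraph V := ⟨{a, b}, {(a, b), (b, a)}⟩

/-- A directed triangle (directed cycle of length 3) on `a, b, c`. -/
def triangle (a b c : V) : DGraph V := ⟨{a, b, c}, {(a, b), (b, c), (c, a)}⟩

/-- The directed graph of a list of vertices with its consecutive edges. -/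
def ofList (l : List V) : DGraph V := ⟨{v | v ∈ l}, {e | e ∈ l.zip l.tail}⟩

/-- `𝒟(P)` for the (undirected) path `P` given by the list `l`:
the double path on `l`. -/
def doubleOfList (l : List V) : DGraph V := ofList l ∪ (ofList l).reverse

/-- The directed cycle through the vertices of `l` in order. -/
def cycleOfList (l : List V) : DGraph V :=
  ⟨{v | v ∈ l}, {e | e ∈ l.zip (l.tail ++ l.take 1)}⟩

/-- `G` is a directed cycle. -/
def IsDirectedCycle (G : DGraph V) : Prop :=
  ∃ l : List V, l.Nodup ∧ 2 ≤ l.length ∧ G = cycleOfList l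

/-- The out-oriented ray with vertices `f 0, f 1, …`, rooted at `f 0`. -/
def outRay (f : ℕ → V) : DGraph V :=
  ⟨Set.range f, {e | ∃ n, e = (f n, f (n + 1))}⟩

/-- The in-oriented ray with vertices `f 0, f 1, …`, rooted at `f 0`. -/
def inRay (f : ℕ → V) : DGraph V :=
  ⟨Set.range f, {e | ∃ n, e = (f (n + 1), f n)}⟩

/-- `𝒟(R)` for the undirected ray `R` with vertices `f 0, f 1, …`. -/
def doubleRay (f : ℕ → V) : DGraph V := outRay f ∪ inRay f

/-- The dominated directed ray on an out-oriented ray: the out-oriented ray `f`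
rooted at `f 0` together with the edges `(f (n+1), f 0)`. -/
def domOutRay (f : ℕ → V) : DGraph V :=
  ⟨Set.range f, {e | ∃ n, e = (f n, f (n + 1))} ∪ {e | ∃ n, e = (f (n + 1), f 0)}⟩

/-- The dominated directed ray on an in-oriented ray: the in-oriented ray `f`
rooted at `f 0` together with the edges `(f 0, f (n+1))`. -/
def domInRay (f : ℕ → V) : DGraph V :=
  ⟨Set.range f, {e | ∃ n, e = (f (n + 1), f n)} ∪ {e | ∃ n, e = (f 0, f (n + 1))}⟩

/-- `G` is a dominated directed ray. -/
def IsDominatedDirectedRay (G : DGraph V) : Prop :=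
  ∃ f : ℕ → V, Function.Injective f ∧ (G = domOutRay f ∨ G = domInRay f)

/-- The internal vertices of a path or walk given as a list. -/
def internals (l : List V) : List V := l.tail.dropLast

/-- `l` is a directed path in `G`. -/
def IsPath (G : DGraph V) (l : List V) : Prop :=
  l ≠ [] ∧ l.Nodup ∧ (∀ v ∈ l, v ∈ G.verts) ∧ ∀ e ∈ l.zip l.tail, e ∈ G.edges

/-- `l` is a directed path in `G` with startvertex `a` and endvertex `b`. -/
def IsPathFrom (G : DGraph V) (a b : V) (l : List V) : Prop :=
  IsPath G l ∧ l.head? = some a ∧ l.getLast? = some b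

/-- There is a directed `a`–`b` path in `G`. -/
def Reaches (G : DGraph V) (a b : V) : Prop := ∃ l, IsPathFrom G a b l

/-- `G` is strongly connected. -/
def StronglyConnected (G : DGraph V) : Prop :=
  ∀ a ∈ G.verts, ∀ b ∈ G.verts, Reaches G a b

/-- `l` is a directed `X`–`Y` path in `G`: it starts in `X`, ends in `Y` and
has no internal vertex in `X ∪ Y`. -/
def IsXYPath (G : DGraph V) (X Y : Set V) (l : List V) : Prop :=
  IsPath G l ∧ (∃ a ∈ X, l.head? = some a) ∧ (∃ b ∈ Y, l.getLast? = some b) ∧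
    ∀ v ∈ internals l, v ∉ X ∪ Y

/-- `T` is an in-arborescence rooted at `r`: its underlying graph is a tree
and all edges are directed towards the root `r`. -/
def IsInArborescence (T : DGraph V) (r : V) : Prop :=
  r ∈ T.verts ∧ (∀ e ∈ T.edges, e.1 ∈ T.verts ∧ e.2 ∈ T.verts) ∧
  (∀ w, (r, w) ∉ T.edges) ∧ (∀ v ∈ T.verts, v ≠ r → ∃! w, (v, w) ∈ T.edges) ∧
  (∀ v ∈ T.verts, Reaches T v r)

/-- `T` is an out-arborescence rooted at `r`. -/
def IsOutArborescence (T : DGraph V) (r : V) : Prop := IsInArborescence T.reverse r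

/-- `v` is a leaf of the in-arborescence `T` rooted at `r`. -/
def IsLeafOfInArb (T : DGraph V) (r v : V) : Prop :=
  v ∈ T.verts ∧ v ≠ r ∧ ∀ u, (u, v) ∉ T.edges

/-- `v` is a leaf of the out-arborescence `T` rooted at `r`. -/
def IsLeafOfOutArb (T : DGraph V) (r v : V) : Prop := IsLeafOfInArb T.reverse r v

/-- A tree-like model of `H` in `D`; every vertex of `H` is identified with the
common root of the in- and out-arborescence of its branch set. -/
structure TreeLikeModel (D H : DGraph V) where
  bag : V → DGraph V
  tin : V → DGraph V
  tout : V → DGraph V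
  emap : V × V → V × V
  bag_sub : ∀ v ∈ H.verts, bag v ⊆ D
  bag_disjoint : ∀ v ∈ H.verts, ∀ w ∈ H.verts, v ≠ w → (bag v).verts ∩ (bag w).verts = ∅
  bag_eq : ∀ v ∈ H.verts, bag v = tin v ∪ tout v
  tin_arb : ∀ v ∈ H.verts, IsInArborescence (tin v) v
  tout_arb : ∀ v ∈ H.verts, IsOutArborescence (tout v) v
  roots_eq : ∀ v ∈ H.verts, (tin v).verts ∩ (tout v).verts = {v}
  emap_mem : ∀ e ∈ H.edges, emap e ∈ D.edges
  emap_tail : ∀ e ∈ H.edges, (emap e).1 ∈ (tout e.1).verts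
  emap_head : ∀ e ∈ H.edges, (emap e).2 ∈ (tin e.2).verts

/-- `H` is a butterfly minor of `D`. -/
def IsButterflyMinor (D H : DGraph V) : Prop := Nonempty (TreeLikeModel D H)

/-- `G` is a double path (`𝒟(P)` for an undirected path `P`) with endpoints
`a` and `b`. -/
def IsDoublePath (G : DGraph V) (a b : V) : Prop :=
  ∃ l : List V, l.Nodup ∧ l.head? = some a ∧ l.getLast? = some b ∧ G = doubleOfList l

/-- `G = 𝒟(S)` for a subdivided star `S` with infinitely many leaves, with
centre `c` and branches `q n`; `teeth` is the set of leaves of `S`. -/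
def IsDSubdividedStar (G : DGraph V) (teeth : Set V) : Prop :=
  ∃ (c : V) (q : ℕ → List V),
    (∀ n, (q n).Nodup ∧ (q n).head? = some c ∧ 2 ≤ (q n).length) ∧
    (∀ m n, m ≠ n → ∀ v, v ∈ q m → v ∈ q n → v = c) ∧
    G = iUnion (fun n => doubleOfList (q n)) ∧
    teeth = {v | ∃ n, (q n).getLast? = some v}

/-- `G` is obtained from `𝒟(S)` for a subdivided star `S` by replacing the
centre of infinite degree by a dominated directed ray. -/
def IsRayCentreStar (G : DGraph V) (teeth : Set V) : Prop :=
  ∃ (f : ℕ → V) (R : DGraph V) (g : ℕ → V) (q : ℕ → List V),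
    Function.Injective f ∧ (R = domOutRay f ∨ R = domInRay f) ∧
    (∀ n, (q n).Nodup ∧ (q n).head? = some (g n)) ∧
    (∀ n, ∀ v ∈ q n, v ∉ Set.range f) ∧
    (∀ m n, m ≠ n → ∀ v ∈ q m, v ∉ q n) ∧
    G = R ∪ iUnion (fun n => doubleOfList (q n) ∪ linkBoth (f n) (g n)) ∧
    teeth = {v | ∃ n, (q n).getLast? = some v}

/-- `G` is shaped by a star, with set of teeth `teeth`. -/
def IsShapedByStar (G : DGraph V) (teeth : Set V) : Prop :=
  (IsDominatedDirectedRay G ∧ teeth = G.verts) ∨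
  IsDSubdividedStar G teeth ∨ IsRayCentreStar G teeth

/-- `G = 𝒟(C)` for a comb `C` with spine `f`, branches `q n` attached at
`f (α n)`; `teeth` is the set of teeth of `C`. -/
def IsDComb (G : DGraph V) (teeth : Set V) : Prop :=
  ∃ (f : ℕ → V) (α : ℕ → ℕ) (q : ℕ → List V),
    Function.Injective f ∧ Function.Injective α ∧
    (∀ n, (q n).Nodup ∧ (q n).head? = some (f (α n))) ∧
    (∀ n, ∀ v ∈ (q n).tail, v ∉ Set.range f) ∧
    (∀ m n, m ≠ n → ∀ v ∈ q m, v ∉ q n) ∧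
    G = doubleRay f ∪ iUnion (fun n => doubleOfList (q n)) ∧
    teeth = {v | ∃ n, (q n).getLast? = some v}

/-- The double path on `l` together with both edges between `b` and the first
vertex of `l` (empty if `l` is empty). -/
def branchGraph (b : V) (l : List V) : DGraph V :=
  match l with
  | [] => ∅
  | h :: _ => doubleOfList l ∪ linkBoth b h

/-- `G` is obtained from `𝒟(C)` for a comb `C` by replacing each junction of
`C` by a directed cycle of length 3 as described in the paper.  Position `k`
of the spine is replaced by the piece `S k` (a single vertex, or a directed
triangle at junctions), with `L k`, `R k`, `B k` the vertices of `S k` to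
which the left spine part, the right spine part and the branch attach, and
`t n` the tooth of branch `n`. -/
def IsTriangleComb (G : DGraph V) (teeth : Set V) : Prop :=
  ∃ (α : ℕ → ℕ) (q : ℕ → List V) (S : ℕ → DGraph V) (L R B : ℕ → V) (t : ℕ → V),
    Function.Injective α ∧
    (∀ j k, j ≠ k → (S j).verts ∩ (S k).verts = ∅) ∧
    (∀ n, (q n).Nodup) ∧
    (∀ m n, m ≠ n → ∀ v ∈ q m, v ∉ q n) ∧
    (∀ n, ∀ v ∈ q n, ∀ k, v ∉ (S k).verts) ∧
    (∀ k, L k ∈ (S k).verts ∧ R k ∈ (S k).verts ∧ B k ∈ (S k).verts) ∧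
    (∀ k, (¬ ∃ n, α n = k ∧ 1 ≤ k) → ∃ v, S k = single v) ∧
    (∀ n, 1 ≤ α n → ∃ a b c, a ≠ b ∧ b ≠ c ∧ a ≠ c ∧ S (α n) = triangle a b c) ∧
    (∀ n, 1 ≤ α n → q n ≠ [] →
      L (α n) ≠ R (α n) ∧ L (α n) ≠ B (α n) ∧ R (α n) ≠ B (α n)) ∧
    (∀ n, 1 ≤ α n → q n = [] →
      t n ∈ (S (α n)).verts ∧ L (α n) ≠ R (α n) ∧ t n ≠ L (α n) ∧ t n ≠ R (α n)) ∧
    (∀ n, q n ≠ [] → (q n).getLast? = some (t n)) ∧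
    (∀ n, α n = 0 → q n = [] → t n ∈ (S 0).verts) ∧
    G = iUnion S ∪ iUnion (fun k => linkBoth (R k) (L (k + 1))) ∪
        iUnion (fun n => branchGraph (B (α n)) (q n)) ∧
    teeth = Set.range t

/-- `G` is shaped by a comb, with set of teeth `teeth`. -/
def IsShapedByComb (G : DGraph V) (teeth : Set V) : Prop :=
  IsDComb G teeth ∨ IsTriangleComb G teeth

/-- The core of a chain of triangles: triangles `a i, b i, c i` together with
the edges `(a (i+1), a i)` and `(c i, c (i+1))`. -/
def chainCore (a b c : ℕ → V) : DGraph V :=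
  ⟨Set.range a ∪ Set.range b ∪ Set.range c,
   {e | ∃ i, e = (a i, b i) ∨ e = (b i, c i) ∨ e = (c i, a i) ∨
        e = (a (i + 1), a i) ∨ e = (c i, c (i + 1))}⟩

/-- `G` is a chain of triangles with set of teeth `teeth`. -/
def IsChainOfTriangles (G : DGraph V) (teeth : Set V) : Prop :=
  ∃ (a b c : ℕ → V) (q : ℕ → List V),
    (Function.Injective fun p : ℕ × Fin 3 => ![a, b, c] p.2 p.1) ∧
    (∀ i, (q i).Nodup ∧ (q i).head? = some (b i)) ∧
    (∀ i, ∀ v ∈ (q i).tail, ∀ j, v ≠ a j ∧ v ≠ b j ∧ v ≠ c j) ∧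
    (∀ i j, i ≠ j → ∀ v ∈ q i, v ∉ q j) ∧
    G = chainCore a b c ∪ iUnion (fun i => doubleOfList (q i)) ∧
    teeth = {v | ∃ i, (q i).getLast? = some v}

/-- `G` is a subdivided in-star with centre (root) `c` and all edges directed
towards `c`; it has infinitely many leaves and `teeth` is its set of leaves. -/
def IsSubdividedInStar (G : DGraph V) (teeth : Set V) : Prop :=
  ∃ (c : V) (q : ℕ → List V),
    (∀ n, (q n).Nodup ∧ (q n).getLast? = some c ∧ 2 ≤ (q n).length) ∧
    (∀ m n, m ≠ n → ∀ v, v ∈ q m → v ∈ q n → v = c) ∧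
    G = iUnion (fun n => ofList (q n)) ∧
    teeth = {v | ∃ n, (q n).head? = some v}

/-- `G` is a subdivided out-star. -/
def IsSubdividedOutStar (G : DGraph V) (teeth : Set V) : Prop :=
  IsSubdividedInStar G.reverse teeth

/-- `G = 𝒟(K_{1,∞})`. -/
def IsDInfiniteStar (G : DGraph V) : Prop :=
  ∃ (c : V) (g : ℕ → V), Function.Injective g ∧ (∀ n, g n ≠ c) ∧
    G = ⟨insert c (Set.range g), {e | ∃ n, e = (c, g n) ∨ e = (g n, c)}⟩

/-- `G = 𝒟(R)` for an undirected ray `R`. -/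
def IsDoubleRayGraph (G : DGraph V) : Prop :=
  ∃ f : ℕ → V, Function.Injective f ∧ G = doubleRay f

/-- `G` is a subdivision of a dominated directed ray (parallel edges being
collapsed): the ray `f`, its original vertices sitting at the positions
`α n ≥ 1`, and for each `n` a subdivided dominating edge `p n`. -/
def IsSubdivDominatedRay (G : DGraph V) : Prop :=
  (∃ (f : ℕ → V) (α : ℕ → ℕ) (p : ℕ → List V),
    Function.Injective f ∧ StrictMono α ∧ (∀ n, 1 ≤ α n) ∧
    (∀ n, (p n).Nodup ∧ (p n).head? = some (f (α n)) ∧ (p n).getLast? = some (f 0) ∧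
      2 ≤ (p n).length) ∧
    (∀ n, ∀ v ∈ internals (p n), v ∉ Set.range f) ∧
    (∀ m n, m ≠ n → ∀ v ∈ internals (p m), v ∉ p n) ∧
    G = outRay f ∪ iUnion (fun n => ofList (p n))) ∨
  (∃ (f : ℕ → V) (α : ℕ → ℕ) (p : ℕ → List V),
    Function.Injective f ∧ StrictMono α ∧ (∀ n, 1 ≤ α n) ∧
    (∀ n, (p n).Nodup ∧ (p n).head? = some (f 0) ∧ (p n).getLast? = some (f (α n)) ∧
      2 ≤ (p n).length) ∧
    (∀ n, ∀ v ∈ internals (p n), v ∉ Set.range f) ∧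
    (∀ m n, m ≠ n → ∀ v ∈ internals (p m), v ∉ p n) ∧
    G = inRay f ∪ iUnion (fun n => ofList (p n)))

section Laced

variable [DecidableEq V]

/-- The segment of the path `l` from `x` to `y` (inclusive). -/
def seg (l : List V) (x y : V) : List V :=
  (l.drop (l.idxOf x)).take (l.idxOf y + 1 - l.idxOf x)

/-- `x ≤ y` along the path `l`. -/
def leIn (l : List V) (x y : V) : Prop :=
  x ∈ l ∧ y ∈ l ∧ l.idxOf x ≤ l.idxOf y

/-- `x < y` along the path `l`. -/
def ltIn (l : List V) (x y : V) : Prop :=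
  x ∈ l ∧ y ∈ l ∧ l.idxOf x < l.idxOf y

/-- The directed paths `P` and `Q` are laced. -/
def Laced (P Q : List V) : Prop :=
  (∀ v ∈ P, v ∉ Q) ∨
  ∃ (ℓ : ℕ) (x y : ℕ → V), 1 ≤ ℓ ∧
    (∀ i, 1 ≤ i → i ≤ ℓ → leIn P (x i) (y i) ∧ leIn Q (x i) (y i)) ∧
    (∀ i, 1 ≤ i → i < ℓ → ltIn P (y i) (x (i + 1)) ∧ ltIn Q (y (i + 1)) (x i)) ∧
    (∀ i, 1 ≤ i → i ≤ ℓ → seg P (x i) (y i) = seg Q (x i) (y i)) ∧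
    (∀ i, 1 ≤ i → i < ℓ → ∀ v ∈ internals (seg Q (y (i + 1)) (x i)), v ∉ P) ∧
    (∀ v ∈ Q.take (Q.idxOf (x ℓ) + 1), v ∈ P → v = x ℓ) ∧
    (∀ v ∈ Q.drop (Q.idxOf (y 1)), v ∈ P → v = y 1)

end Laced

/-- The out-ray `f` and the in-ray `g` with common root are knit:
`x i = f (p i) = g (p' i)` and `y i = f (q i) = g (q' i)` are the shared
segments, in the orders required in the paper. -/
def Knit (f g : ℕ → V) : Prop :=
  f 0 = g 0 ∧
  ∃ p q p' q' : ℕ → ℕ,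
    (∀ i, 0 < p i ∧ p i ≤ q i ∧ q i < p (i + 1)) ∧
    (∀ i, 0 < q' i ∧ q' i ≤ p' i ∧ p' i < q' (i + 1)) ∧
    (∀ i, q i - p i = p' i - q' i) ∧
    (∀ i, ∀ k ≤ q i - p i, f (p i + k) = g (p' i - k)) ∧
    (∀ i, ∀ m, p' i < m → m < q' (i + 1) → g m ∉ Set.range f) ∧
    (∀ m, 0 < m → m < q' 0 → g m ∉ Set.range f)

section Contract

variable [DecidableEq V]

/-- The map identifying `v` with `u`. -/
def contractFun (u v : V) : V → V := fun x => if x = v then u else x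

/-- Contracting the edge `(u, v)` of `G` onto the vertex `u`. -/
def contractEdge (G : DGraph V) (u v : V) : DGraph V :=
  ⟨contractFun u v '' G.verts,
   {e | e ≠ (u, u) ∧ ∃ e' ∈ G.edges, e = (contractFun u v e'.1, contractFun u v e'.2)}⟩

end Contract

/-- The edge `(u, v)` of `G` is butterfly contractible. -/
def IsButterflyContractibleEdge (G : DGraph V) (u v : V) : Prop :=
  (u, v) ∈ G.edges ∧
  ((∀ w, (u, w) ∈ G.edges → w = v) ∨ (∀ w, (w, v) ∈ G.edges → w = u))

/-- `G` and `H` are isomorphic directed graphs. -/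
def Isom (G H : DGraph V) : Prop :=
  ∃ φ : V → V, Set.BijOn φ G.verts H.verts ∧
    ∀ u ∈ G.verts, ∀ v ∈ G.verts, ((u, v) ∈ G.edges ↔ (φ u, φ v) ∈ H.edges)

end DGraph

/-! ### Auxiliary lemmas for the laced-path theorem -/

section LacedAux

universe v

variable {V : Type u} [DecidableEq V]

open List

namespace LacedAux

/-- characterization of consecutive pairs -/
lemma mem_zip_tail_iff {e : V × V} : ∀ {l : List V},
    e ∈ l.zip l.tail ↔ ∃ l₁ l₂ : List V, l = l₁ ++ e.1 :: e.2 :: l₂ := by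
  intro l
  induction l with
  | nil => simp
  | cons a t ih =>
    cases t with
    | nil =>
      simp only [List.zip_nil_right, List.tail_cons]
      constructor
      · intro h; simp at h
      · rintro ⟨l₁, l₂, h⟩
        rcases l₁ with _ | ⟨c, l₁⟩ <;> simp_all
    | cons b t' =>
      simp only [List.tail_cons]
      constructor
      · intro h
        rw [List.zip_cons_cons] at h
        rcases List.mem_cons.1 h with h | h
        · exact ⟨[], t', by subst h; simp⟩
        · obtain ⟨l₁, l₂, h⟩ := ih.1 h
          exact ⟨a :: l₁, l₂, by simp [h]⟩
      · rintro ⟨l₁, l₂, h⟩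
        rw [List.zip_cons_cons]
        rcases l₁ with _ | ⟨c, l₁⟩
        · refine List.mem_cons.2 (Or.inl ?_)
          cases e; simp_all
        · simp only [List.cons_append, List.cons.injEq] at h
          obtain ⟨h1, h2⟩ := h
          exact List.mem_cons.2 (Or.inr (ih.2 ⟨l₁, l₂, h2⟩))

lemma pairs_infix {l' l : List V} (h : l' <:+: l) {e : V × V}
    (he : e ∈ l'.zip l'.tail) : e ∈ l.zip l.tail := by
  obtain ⟨s, t, rfl⟩ := h
  obtain ⟨l₁, l₂, rfl⟩ := mem_zip_tail_iff.1 he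
  exact mem_zip_tail_iff.2 ⟨s ++ l₁, l₂ ++ t, by simp⟩

lemma pairs_junction {X Y : List V} {u v : V} (hu : X.getLast? = some u)
    (hv : Y.head? = some v) : (u, v) ∈ (X ++ Y).zip (X ++ Y).tail := by
  obtain ⟨X₀, rfl⟩ := List.getLast?_eq_some_iff.1 hu
  obtain ⟨Y₀, rfl⟩ : ∃ Y₀, Y = v :: Y₀ := by
    cases Y with
    | nil => simp at hv
    | cons a Y₀ =>
      simp only [List.head?_cons, Option.some.injEq] at hv
      exact ⟨Y₀, by rw [hv]⟩
  exact mem_zip_tail_iff.2 ⟨X₀, Y₀, by simp⟩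

lemma pairs_append {X Y : List V} {e : V × V} (h : e ∈ (X ++ Y).zip (X ++ Y).tail) :
    e ∈ X.zip X.tail ∨ e ∈ Y.zip Y.tail ∨
      (X.getLast? = some e.1 ∧ Y.head? = some e.2) := by
  obtain ⟨l₁, l₂, hl⟩ := mem_zip_tail_iff.1 h
  rcases le_or_gt (l₁.length + 2) X.length with hle | hlt
  · left
    refine mem_zip_tail_iff.2 ⟨l₁, X.drop (l₁.length + 2), ?_⟩
    have hX : X.take (l₁.length + 2) = l₁ ++ [e.1, e.2] := by
      rw [← List.take_append_of_le_length (l₂ := Y) hle, hl, List.take_append]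
      rw [List.take_of_length_le (by omega)]; simp
    conv_lhs => rw [← List.take_append_drop (l₁.length + 2) X]
    rw [hX]
    simp
  · rcases le_or_gt X.length l₁.length with hge | hlt2
    · right; left
      refine mem_zip_tail_iff.2 ⟨l₁.drop X.length, l₂, ?_⟩
      have hY : Y = (X ++ Y).drop X.length := by simp
      rw [hl] at hY
      rw [hY, List.drop_append]
      simp [Nat.sub_eq_zero_of_le hge]
    · right; right
      have hXlen : X.length = l₁.length + 1 := by omega
      have h1 : X = l₁ ++ [e.1] := by
        have hX : X = (X ++ Y).take X.length := by simp
        rw [hl] at hX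
        conv_lhs => rw [hX]
        rw [hXlen, List.take_append]
        rw [List.take_of_length_le (by omega)]; simp
      have h2 : Y = e.2 :: l₂ := by
        have hY : Y = (X ++ Y).drop X.length := by simp
        rw [hl] at hY
        conv_lhs => rw [hY]
        rw [hXlen, List.drop_append]
        rw [List.drop_eq_nil_of_le (by omega)]; simp
      exact ⟨by rw [h1]; simp, by rw [h2]; simp⟩

/-! ### seg lemmas -/

lemma seg_eq_cons {l : List V} {x : V} (y : V) (hx : x ∈ l)
    (hxy : l.idxOf x ≤ l.idxOf y) :
    DGraph.seg l x y
      = x :: ((l.drop (l.idxOf x + 1)).take (l.idxOf y - l.idxOf x)) := by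
  unfold DGraph.seg
  have hi : l.idxOf x < l.length := List.idxOf_lt_length_iff.2 hx
  rw [List.drop_eq_getElem_cons hi, List.getElem_idxOf]
  have h : l.idxOf y + 1 - l.idxOf x = (l.idxOf y - l.idxOf x) + 1 := by omega
  rw [h, List.take_succ_cons]

lemma seg_self {l : List V} {x : V} (hx : x ∈ l) : DGraph.seg l x x = [x] := by
  rw [seg_eq_cons x hx le_rfl]
  simp

lemma head?_seg {l : List V} {x : V} (y : V) (hx : x ∈ l)
    (hxy : l.idxOf x ≤ l.idxOf y) : (DGraph.seg l x y).head? = some x := by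
  rw [seg_eq_cons y hx hxy]; rfl

lemma seg_infix (l : List V) (x y : V) : DGraph.seg l x y <:+: l :=
  (List.take_prefix _ _).isInfix.trans (List.drop_suffix _ _).isInfix

lemma length_seg {l : List V} {x y : V} (hy : y ∈ l)
    (hxy : l.idxOf x ≤ l.idxOf y) :
    (DGraph.seg l x y).length = l.idxOf y + 1 - l.idxOf x := by
  have hj : l.idxOf y < l.length := List.idxOf_lt_length_iff.2 hy
  unfold DGraph.seg
  rw [List.length_take, List.length_drop]
  omega

lemma getLast?_seg {l : List V} {x y : V} (hx : x ∈ l) (hy : y ∈ l)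
    (hxy : l.idxOf x ≤ l.idxOf y) :
    (DGraph.seg l x y).getLast? = some y := by
  have hj : l.idxOf y < l.length := List.idxOf_lt_length_iff.2 hy
  rw [List.getLast?_eq_some_iff]
  refine ⟨(l.drop (l.idxOf x)).take (l.idxOf y - l.idxOf x), ?_⟩
  unfold DGraph.seg
  have h : l.idxOf y + 1 - l.idxOf x = (l.idxOf y - l.idxOf x) + 1 := by omega
  rw [h, List.take_succ]
  congr 1
  have hlt : l.idxOf y - l.idxOf x < (l.drop (l.idxOf x)).length := by
    rw [List.length_drop]; omega
  rw [List.getElem?_eq_getElem hlt]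
  rw [List.getElem_drop]
  have : l.idxOf x + (l.idxOf y - l.idxOf x) = l.idxOf y := by omega
  simp only [this, List.getElem_idxOf hj]
  rfl

lemma mem_seg_of {l : List V} {x y v : V} (hv : v ∈ l)
    (h1 : l.idxOf x ≤ l.idxOf v) (h2 : l.idxOf v ≤ l.idxOf y) :
    v ∈ DGraph.seg l x y := by
  have hiv : l.idxOf v < l.length := List.idxOf_lt_length_iff.2 hv
  rw [List.mem_iff_getElem]
  refine ⟨l.idxOf v - l.idxOf x, ?_, ?_⟩
  · unfold DGraph.seg
    rw [List.length_take, List.length_drop]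
    omega
  · unfold DGraph.seg
    rw [List.getElem_take, List.getElem_drop]
    have h : l.idxOf x + (l.idxOf v - l.idxOf x) = l.idxOf v := by omega
    simp only [h]
    exact List.getElem_idxOf hiv

lemma idxOf_mem_seg {l : List V} {x y v : V} (hnd : l.Nodup)
    (hv : v ∈ DGraph.seg l x y) :
    l.idxOf x ≤ l.idxOf v ∧ l.idxOf v ≤ l.idxOf y := by
  rw [List.mem_iff_getElem] at hv
  obtain ⟨k, hk, hkv⟩ := hv
  unfold DGraph.seg at hk hkv
  have hk' := hk
  rw [List.length_take, List.length_drop] at hk'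
  rw [List.getElem_take, List.getElem_drop] at hkv
  have : l.idxOf v = l.idxOf x + k := by
    rw [← hkv, List.Nodup.idxOf_getElem hnd]
  omega

lemma mem_seg_mem {l : List V} {x y v : V} (hv : v ∈ DGraph.seg l x y) : v ∈ l :=
  (seg_infix l x y).sublist.mem hv

lemma seg_append_left {l A : List V} {x y : V} (hx : x ∉ A) (hy : y ∉ A) :
    DGraph.seg (A ++ l) x y = DGraph.seg l x y := by
  unfold DGraph.seg
  rw [List.idxOf_append_of_notMem hx, List.idxOf_append_of_notMem hy,
    List.drop_append]
  congr 1
  omega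
  simp

/-! ### leIn / ltIn transfer -/

lemma leIn_append_right {U C : List V} {u v : V} (hu : u ∉ U) (hv : v ∉ U)
    (h : DGraph.leIn C u v) : DGraph.leIn (U ++ C) u v := by
  obtain ⟨h1, h2, h3⟩ := h
  refine ⟨List.mem_append_right _ h1, List.mem_append_right _ h2, ?_⟩
  rw [List.idxOf_append_of_notMem hu, List.idxOf_append_of_notMem hv]
  omega

lemma ltIn_append_right {U C : List V} {u v : V} (hu : u ∉ U) (hv : v ∉ U)
    (h : DGraph.ltIn C u v) : DGraph.ltIn (U ++ C) u v := by
  obtain ⟨h1, h2, h3⟩ := h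
  refine ⟨List.mem_append_right _ h1, List.mem_append_right _ h2, ?_⟩
  rw [List.idxOf_append_of_notMem hu, List.idxOf_append_of_notMem hv]
  omega

end LacedAux

end LacedAux
section LacedGlue

variable {V : Type u} [DecidableEq V]

open List DGraph

namespace LacedAux

lemma mem_take_iff_idxOf_lt {l : List V} (hnd : l.Nodup) {v : V} {n : ℕ}
    (hv : v ∈ l) : v ∈ l.take n ↔ l.idxOf v < n := by
  constructor
  · intro h
    rw [List.mem_iff_getElem] at h
    obtain ⟨k, hk, hkv⟩ := h
    have hk2 : k < l.length := lt_of_lt_of_le hk (by simp [List.length_take])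
    have hk3 : k < n := lt_of_lt_of_le hk (by simp [List.length_take])
    rw [List.getElem_take] at hkv
    rw [← hkv, List.Nodup.idxOf_getElem hnd]
    exact hk3
  · intro h
    have hiv : l.idxOf v < l.length := List.idxOf_lt_length_iff.2 hv
    rw [List.mem_iff_getElem]
    refine ⟨l.idxOf v, ?_, ?_⟩
    · rw [List.length_take]; omega
    · rw [List.getElem_take]; exact List.getElem_idxOf hiv

lemma glue {P : List V} (hPnd : P.Nodup) (A0 C : List V) {x y : V}
    (hx : x ∈ P) (hy : y ∈ P) (hxy : P.idxOf x ≤ P.idxOf y)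
    (hnd : (A0 ++ (DGraph.seg P x y ++ C)).Nodup)
    (hA0 : ∀ v ∈ A0, v ∉ P)
    (hC : ∀ v ∈ C, v ∈ P → P.idxOf v < P.idxOf x)
    (hLC : DGraph.Laced P C) :
    DGraph.Laced P (A0 ++ (DGraph.seg P x y ++ C)) := by
  set S := DGraph.seg P x y with hSdef
  set Q' := A0 ++ (S ++ C) with hQ'def
  obtain ⟨B, hSB⟩ : ∃ B, S = x :: B := ⟨_, seg_eq_cons y hx hxy⟩
  have hSlast : S.getLast? = some y := getLast?_seg hx hy hxy
  obtain ⟨S0, hS0⟩ := List.getLast?_eq_some_iff.1 hSlast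
  have hSlen : 1 ≤ S.length := by rw [hSB]; simp
  have hS0len : S.length = S0.length + 1 := by rw [hS0]; simp
  have hxS : x ∈ S := by rw [hSB]; exact List.mem_cons_self
  have hyS : y ∈ S := by rw [hS0]; simp
  have hSP : ∀ v ∈ S, v ∈ P := fun v hv => mem_seg_mem hv
  have hxA0 : x ∉ A0 := fun h => hA0 x h hx
  have hyA0 : y ∉ A0 := fun h => hA0 y h hy
  -- nodup pieces
  have hndA0 := (List.nodup_append.1 hnd).1
  have hndSC := (List.nodup_append.1 hnd).2.1
  have hdisjA0 := (List.nodup_append.1 hnd).2.2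
  have hndS := (List.nodup_append.1 hndSC).1
  have hndC := (List.nodup_append.1 hndSC).2.1
  have hdisjSC := (List.nodup_append.1 hndSC).2.2
  have hCA0 : ∀ u ∈ C, u ∉ A0 := fun u hu hA =>
    hdisjA0 u hA u (List.mem_append_right _ hu) rfl
  have hCS : ∀ u ∈ C, u ∉ S := fun u hu hS' => hdisjSC u hS' u hu rfl
  have hCnotA0S : ∀ u ∈ C, u ∉ A0 ++ S := by
    intro u hu h
    rcases List.mem_append.1 h with h | h
    · exact hCA0 u hu h
    · exact hCS u hu h
  have hyC : y ∉ C := fun h => hCS y h hyS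
  -- memberships in Q'
  have hxQ' : x ∈ Q' := List.mem_append_right _ (List.mem_append_left _ hxS)
  have hyQ' : y ∈ Q' := List.mem_append_right _ (List.mem_append_left _ hyS)
  have hCQ' : ∀ u ∈ C, u ∈ Q' := fun u hu =>
    List.mem_append_right _ (List.mem_append_right _ hu)
  have hyS0 : y ∉ S0 := by
    intro h
    have := hndS
    rw [hS0] at this
    exact (List.disjoint_of_nodup_append this) h (List.mem_singleton.2 rfl)
  -- index computations
  have idxx : Q'.idxOf x = A0.length := by
    rw [hQ'def, List.idxOf_append_of_notMem hxA0,
      List.idxOf_append_of_mem hxS, hSB, List.idxOf_cons_self]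
    omega
  have idxyS : S.idxOf y = S0.length := by
    rw [hS0, List.idxOf_append_of_notMem hyS0]
    simp
  have idxy : Q'.idxOf y = A0.length + S0.length := by
    rw [hQ'def, List.idxOf_append_of_notMem hyA0,
      List.idxOf_append_of_mem hyS, idxyS]
  have idxC : ∀ u ∈ C, Q'.idxOf u = A0.length + S.length + C.idxOf u := by
    intro u hu
    rw [hQ'def, List.idxOf_append_of_notMem (hCA0 u hu),
      List.idxOf_append_of_notMem (hCS u hu)]
    omega
  -- structural computations
  have hassoc : Q' = (A0 ++ S) ++ C := by rw [hQ'def, List.append_assoc]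
  have hassoc2 : Q' = (A0 ++ S0) ++ (y :: C) := by
    rw [hQ'def, hS0]
    simp
  have dropy : Q'.drop (Q'.idxOf y) = y :: C := by
    rw [idxy, hassoc2]
    have : A0.length + S0.length = (A0 ++ S0).length := by simp
    rw [this, List.drop_left]
  have takex : Q'.take (Q'.idxOf x + 1) = A0 ++ [x] := by
    rw [idxx, hQ'def, hSB]
    rw [show (x :: B) ++ C = x :: (B ++ C) by simp, List.take_append]
    simp
  have idxxS : S.idxOf x = 0 := by rw [hSB]; exact List.idxOf_cons_self
  have segQ' : DGraph.seg Q' x y = S := by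
    rw [hQ'def, seg_append_left hxA0 hyA0]
    unfold DGraph.seg
    rw [List.idxOf_append_of_mem hxS, List.idxOf_append_of_mem hyS,
      idxxS, idxyS]
    rw [show S0.length + 1 - 0 = S.length by omega]
    simp [List.take_left]
  have segC : ∀ u ∈ C, ∀ w ∈ C, DGraph.seg Q' u w = DGraph.seg C u w := by
    intro u hu w hw
    rw [hassoc]
    exact seg_append_left (hCnotA0S u hu) (hCnotA0S w hw)
  have dropC : ∀ u ∈ C, Q'.drop (Q'.idxOf u) = C.drop (C.idxOf u) := by
    intro u hu
    rw [idxC u hu, hassoc, show A0.length + S.length = (A0 ++ S).length by simp,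
      List.drop_append]
    simp
  have segyC : ∀ u ∈ C, DGraph.seg Q' y u = y :: C.take (C.idxOf u + 1) := by
    intro u hu
    have huy : u ≠ y := fun h => hyC (h ▸ hu)
    rw [hassoc2, seg_append_left (by
        intro h
        rcases List.mem_append.1 h with h | h
        · exact hyA0 h
        · exact hyS0 h)
      (by
        intro h
        rcases List.mem_append.1 h with h | h
        · exact hCA0 u hu h
        · exact hCS u hu (hS0 ▸ List.mem_append_left _ h))]
    unfold DGraph.seg
    rw [List.idxOf_cons_self, List.idxOf_cons_ne _ (Ne.symm huy)]
    simp [List.take_succ_cons, Nat.succ_eq_add_one]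
  -- lift of leIn/ltIn from C to Q'
  have leInLift : ∀ u w, DGraph.leIn C u w → DGraph.leIn Q' u w := by
    intro u w h
    rw [hassoc]
    exact leIn_append_right (hCnotA0S u h.1) (hCnotA0S w h.2.1) h
  have ltInLift : ∀ u w, DGraph.ltIn C u w → DGraph.ltIn Q' u w := by
    intro u w h
    rw [hassoc]
    exact ltIn_append_right (hCnotA0S u h.1) (hCnotA0S w h.2.1) h
  -- main case split
  rcases hLC with hdisj | ⟨ℓr, xr, yr, hℓr, b1, b2, b3, b4, b5, b6⟩
  · -- C disjoint from P : one block
    right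
    refine ⟨1, fun _ => x, fun _ => y, le_rfl, ?_, ?_, ?_, ?_, ?_, ?_⟩
    · intro i _ _
      exact ⟨⟨hx, hy, hxy⟩, ⟨hxQ', hyQ', by rw [idxx, idxy]; omega⟩⟩
    · intro i h1 h2; omega
    · intro i _ _
      rw [segQ']
    · intro i h1 h2; omega
    · intro v hv hvP
      rw [takex] at hv
      rcases List.mem_append.1 hv with h | h
      · exact absurd hvP (hA0 v h)
      · exact List.mem_singleton.1 h
    · intro v hv hvP
      rw [dropy] at hv
      rcases List.mem_cons.1 hv with h | h
      · exact h
      · exact absurd h (hdisj v hvP)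
  · -- C laced with blocks: add one block on top
    have hxrC : ∀ i, 1 ≤ i → i ≤ ℓr → xr i ∈ C := fun i h1 h2 => (b1 i h1 h2).2.1
    have hyrC : ∀ i, 1 ≤ i → i ≤ ℓr → yr i ∈ C := fun i h1 h2 => (b1 i h1 h2).2.2.1
    right
    refine ⟨ℓr + 1, fun i => if i = ℓr + 1 then x else xr i,
      fun i => if i = ℓr + 1 then y else yr i, by omega, ?_, ?_, ?_, ?_, ?_, ?_⟩
    · intro i h1 h2
      beta_reduce
      by_cases hi : i = ℓr + 1
      · rw [if_pos hi, if_pos hi]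
        exact ⟨⟨hx, hy, hxy⟩, ⟨hxQ', hyQ', by rw [idxx, idxy]; omega⟩⟩
      · have h2' : i ≤ ℓr := by omega
        rw [if_neg hi, if_neg hi]
        exact ⟨(b1 i h1 h2').1, leInLift _ _ (b1 i h1 h2').2⟩
    · intro i h1 h2
      beta_reduce
      have h2' : i ≤ ℓr := by omega
      have e1 : (if i = ℓr + 1 then y else yr i) = yr i := if_neg (by omega)
      have e4 : (if i = ℓr + 1 then x else xr i) = xr i := if_neg (by omega)
      rw [e1, e4]
      by_cases hi : i = ℓr
      · have e2 : (if i + 1 = ℓr + 1 then x else xr (i + 1)) = x := if_pos (by omega)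
        have e3 : (if i + 1 = ℓr + 1 then y else yr (i + 1)) = y := if_pos (by omega)
        rw [e2, e3]
        constructor
        · have hyri := hyrC i h1 (by omega)
          have hyrP : yr i ∈ P := (b1 i h1 (by omega)).1.2.1
          exact ⟨hyrP, hx, hC _ hyri hyrP⟩
        · have hxri := hxrC i h1 (by omega)
          refine ⟨hyQ', hCQ' _ hxri, ?_⟩
          rw [idxy, idxC _ hxri]
          omega
      · have h3 : i < ℓr := by omega
        have e2 : (if i + 1 = ℓr + 1 then x else xr (i + 1)) = xr (i + 1) :=
          if_neg (by omega)
        have e3 : (if i + 1 = ℓr + 1 then y else yr (i + 1)) = yr (i + 1) :=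
          if_neg (by omega)
        rw [e2, e3]
        exact ⟨(b2 i h1 h3).1, ltInLift _ _ (b2 i h1 h3).2⟩
    · intro i h1 h2
      beta_reduce
      by_cases hi : i = ℓr + 1
      · rw [if_pos hi, if_pos hi, segQ']
      · have h2' : i ≤ ℓr := by omega
        rw [if_neg hi, if_neg hi, b3 i h1 h2',
          segC _ (hxrC i h1 h2') _ (hyrC i h1 h2')]
    · intro i h1 h2
      beta_reduce
      have h2' : i ≤ ℓr := by omega
      have e4 : (if i = ℓr + 1 then x else xr i) = xr i := if_neg (by omega)
      rw [e4]
      by_cases hi : i = ℓr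
      · have e3 : (if i + 1 = ℓr + 1 then y else yr (i + 1)) = y := if_pos (by omega)
        rw [e3]
        intro v hv hvP
        have hxri := hxrC i h1 (by omega)
        rw [segyC _ hxri] at hv
        unfold DGraph.internals at hv
        rw [List.tail_cons] at hv
        have hlt : C.idxOf (xr i) < C.length := List.idxOf_lt_length_iff.2 hxri
        have hlen : (C.take (C.idxOf (xr i) + 1)).length = C.idxOf (xr i) + 1 := by
          rw [List.length_take]; omega
        rw [List.dropLast_eq_take, hlen, Nat.add_sub_cancel, List.take_take,
          min_eq_left (by omega)] at hv
        have hvC : v ∈ C := List.take_subset _ _ hv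
        have hidxv : C.idxOf v < C.idxOf (xr i) :=
          (mem_take_iff_idxOf_lt hndC hvC).1 hv
        have hv' : v ∈ C.take (C.idxOf (xr i) + 1) :=
          (mem_take_iff_idxOf_lt hndC hvC).2 (by omega)
        have hv'' : v ∈ C.take (C.idxOf (xr ℓr) + 1) := by rw [← hi]; exact hv'
        have hveq := b5 v hv'' hvP
        rw [hveq, hi] at hidxv
        omega
      · have h3 : i < ℓr := by omega
        have e3 : (if i + 1 = ℓr + 1 then y else yr (i + 1)) = yr (i + 1) :=
          if_neg (by omega)
        rw [e3, segC _ (hyrC (i+1) (by omega) (by omega)) _ (hxrC i h1 h2')]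
        exact b4 i h1 h3
    · beta_reduce
      rw [show (if ℓr + 1 = ℓr + 1 then x else xr (ℓr + 1)) = x from if_pos rfl]
      intro v hv hvP
      rw [takex] at hv
      rcases List.mem_append.1 hv with h | h
      · exact absurd hvP (hA0 v h)
      · exact List.mem_singleton.1 h
    · beta_reduce
      rw [show (if 1 = ℓr + 1 then y else yr 1) = yr 1 from if_neg (by omega)]
      intro v hv hvP
      rw [dropC _ (hyrC 1 le_rfl hℓr)] at hv
      exact b6 v hv hvP
end LacedAux

end LacedGlue
section LacedMain

variable {V : Type u} [DecidableEq V]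

open List DGraph

namespace LacedAux

lemma getLast?_cons_of_ne_nil (a : V) {l : List V} (h : l ≠ []) :
    (a :: l).getLast? = l.getLast? := by
  rw [List.getLast?_eq_getLast (List.cons_ne_nil a l), List.getLast_cons h,
    List.getLast?_eq_getLast h]

lemma main (P : List V) (hPnd : P.Nodup) :
    ∀ (n : ℕ) (W : List V), W.length ≤ n → W ≠ [] → W.Nodup →
    ∃ W', W' ≠ [] ∧ W'.Nodup ∧ W'.head? = W.head? ∧ W'.getLast? = W.getLast? ∧
      (∀ v ∈ W', v ∈ P ∨ v ∈ W) ∧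
      (∀ e ∈ W'.zip W'.tail, e ∈ P.zip P.tail ∨ e ∈ W.zip W.tail) ∧
      (∀ v ∈ W', v ∈ P → ∃ w, w ∈ W ∧ w ∈ P ∧ P.idxOf v ≤ P.idxOf w) ∧
      DGraph.Laced P W' := by
  intro n
  induction n with
  | zero =>
    intro W hlen hne _
    exact absurd (List.eq_nil_of_length_eq_zero (by omega)) hne
  | succ n ih =>
    intro W hlen hne hnd
    by_cases hPW : ∃ v ∈ W, v ∈ P
    case neg =>
      refine ⟨W, hne, hnd, rfl, rfl, fun v hv => Or.inr hv,
        fun e he => Or.inr he, ?_, Or.inl ?_⟩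
      · intro v hv hvP
        exact absurd ⟨v, hv, hvP⟩ hPW
      · intro v _ hvW
        exact hPW ⟨v, hvW, ‹v ∈ P›⟩
    case pos =>
      set A0 := W.takeWhile (fun v => decide (v ∉ P)) with hA0def
      set D0 := W.dropWhile (fun v => decide (v ∉ P)) with hD0def
      have hW : A0 ++ D0 = W := List.takeWhile_append_dropWhile
      have hA0P : ∀ v ∈ A0, v ∉ P := by
        intro v hv
        have := List.mem_takeWhile_imp hv
        simpa using this
      have hD0ne : D0 ≠ [] := by
        intro h
        obtain ⟨v, hvW, hvP⟩ := hPW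
        rw [← hW, h, List.append_nil] at hvW
        exact hA0P v hvW hvP
      set x := D0.head hD0ne with hxdef
      have hxP : x ∈ P := by
        have := List.head_dropWhile_not (fun v => decide (v ∉ P)) (by rw [← hD0def]; exact hD0ne)
        simp only [← hD0def, ← hxdef] at this
        simpa using this
      have hxD0 : x ∈ D0 := List.head_mem hD0ne
      have hxW : x ∈ W := by rw [← hW]; exact List.mem_append_right _ hxD0
      -- choose y : last vertex of W among P-vertices above x
      set p : V → Bool := fun v => decide (v ∈ P ∧ P.idxOf x ≤ P.idxOf v) with hpdef
      set SL := W.filter p with hSLdef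
      have hxSL : x ∈ SL := List.mem_filter.2 ⟨hxW, by simp [hpdef, hxP]⟩
      have hSLne : SL ≠ [] := List.ne_nil_of_mem hxSL
      set y := SL.getLast hSLne with hydef
      have hySL : y ∈ SL := List.getLast_mem hSLne
      have hyW : y ∈ W := List.mem_of_mem_filter hySL
      have hyp : y ∈ P ∧ P.idxOf x ≤ P.idxOf y := by
        have := (List.mem_filter.1 hySL).2
        simpa [hpdef] using this
      obtain ⟨hyP, hxy⟩ := hyp
      have hyD0 : y ∈ D0 := by
        rcases List.mem_append.1 (hW ▸ hyW) with h | h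
        · exact absurd hyP (hA0P y h)
        · exact h
      set j := D0.idxOf y with hjdef
      have hj : j < D0.length := List.idxOf_lt_length_iff.2 hyD0
      set W1 := D0.take j with hW1def
      set T := D0.drop (j + 1) with hTdef
      have hD0split : D0 = W1 ++ y :: T := by
        conv_lhs => rw [← List.take_append_drop j D0]
        rw [hW1def]
        congr 1
        rw [List.drop_eq_getElem_cons hj, hTdef]
        congr 1
        exact List.getElem_idxOf hj
      have hWsplit : W = (A0 ++ W1) ++ y :: T := by
        rw [← hW, hD0split, List.append_assoc]
      have hndyT : (y :: T).Nodup := by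
        rw [hWsplit] at hnd
        exact (List.nodup_append.1 hnd).2.1
      have hyT : y ∉ T := (List.nodup_cons.1 hndyT).1
      have hndT : T.Nodup := (List.nodup_cons.1 hndyT).2
      have hTlen : T.length ≤ n := by
        have := congrArg List.length hWsplit
        simp only [List.length_append, List.length_cons] at this
        omega
      -- key property of the choice of y
      have KEY : ∀ v ∈ T, v ∈ P → P.idxOf v < P.idxOf x := by
        intro v hvT hvP
        by_contra hcon
        push_neg at hcon
        have hpv : p v = true := by simp [hpdef, hvP, hcon]
        have hvM : v ∈ T.filter p := List.mem_filter.2 ⟨hvT, hpv⟩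
        have hMne : T.filter p ≠ [] := List.ne_nil_of_mem hvM
        have hSLsplit : SL = (A0 ++ W1).filter p ++ (y :: T.filter p) := by
          rw [hSLdef, hWsplit, List.filter_append, List.filter_cons_of_pos
            (by exact (List.mem_filter.1 hySL).2)]
        have hy? : SL.getLast? = some y := by
          rw [hydef]
          exact (List.getLast?_eq_getLast hSLne).symm ▸ rfl
        rw [hSLsplit, List.getLast?_append, getLast?_cons_of_ne_nil y hMne,
          List.getLast?_eq_getLast hMne] at hy?
        simp only [Option.some_or, Option.some.injEq] at hy?
        have : y ∈ T.filter p := hy? ▸ List.getLast_mem hMne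
        exact hyT (List.mem_of_mem_filter this)
      -- the recursive piece
      have hCex : ∃ C : List V, C.Nodup ∧ C.head? = T.head? ∧ C.getLast? = T.getLast? ∧
          (∀ v ∈ C, v ∈ P ∨ v ∈ T) ∧
          (∀ e ∈ C.zip C.tail, e ∈ P.zip P.tail ∨ e ∈ T.zip T.tail) ∧
          (∀ v ∈ C, v ∈ P → ∃ w, w ∈ T ∧ w ∈ P ∧ P.idxOf v ≤ P.idxOf w) ∧
          DGraph.Laced P C := by
        by_cases hT : T = []
        · exact ⟨[], List.nodup_nil, by rw [hT], by rw [hT], by simp,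
            by simp, by simp, Or.inl (by simp)⟩
        · obtain ⟨C, _, h2, h3, h4, h5, h6, h7, h8⟩ := ih T hTlen hT hndT
          exact ⟨C, h2, h3, h4, h5, h6, h7, h8⟩
      obtain ⟨C, hCnd, hChead, hClast, hCverts, hCedges, hCbound, hCLaced⟩ := hCex
      have hCP_lt : ∀ v ∈ C, v ∈ P → P.idxOf v < P.idxOf x := by
        intro v hv hvP
        obtain ⟨w, hwT, hwP, hle⟩ := hCbound v hv hvP
        exact lt_of_le_of_lt hle (KEY w hwT hwP)
      have hCT : ∀ v ∈ C, v ∈ P ∨ v ∈ T := hCverts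
      -- the segment
      set S := DGraph.seg P x y with hSdef
      have hShead : S.head? = some x := head?_seg y hxP hxy
      have hSlast : S.getLast? = some y := getLast?_seg hxP hyP hxy
      have hSP : ∀ v ∈ S, v ∈ P := fun v hv => mem_seg_mem hv
      have hSnd : S.Nodup := (seg_infix P x y).sublist.nodup hPnd
      have hSidx : ∀ v ∈ S, P.idxOf x ≤ P.idxOf v ∧ P.idxOf v ≤ P.idxOf y :=
        fun v hv => idxOf_mem_seg hPnd hv
      have hA0nd : A0.Nodup := (List.takeWhile_prefix _).sublist.nodup hnd
      -- disjointness and nodup of the new list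
      have hA0T : ∀ v ∈ A0, v ∉ T := by
        rw [hWsplit] at hnd
        intro v hv hvT
        exact (List.disjoint_of_nodup_append hnd) (List.mem_append_left _ hv)
          (List.mem_cons_of_mem _ hvT)
      have hSC : ∀ v ∈ S, v ∉ C := by
        intro v hvS hvC
        have h1 := hCP_lt v hvC (hSP v hvS)
        have h2 := (hSidx v hvS).1
        omega
      have hA0S : ∀ v ∈ A0, v ∉ S := fun v hv hvS => hA0P v hv (hSP v hvS)
      have hA0C : ∀ v ∈ A0, v ∉ C := by
        intro v hv hvC
        rcases hCT v hvC with h | h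
        · exact hA0P v hv h
        · exact hA0T v hv h
      have hndW' : (A0 ++ (S ++ C)).Nodup := by
        rw [List.nodup_append]
        refine ⟨hA0nd, ?_, ?_⟩
        · rw [List.nodup_append]
          exact ⟨hSnd, hCnd, fun a ha b hb hab => hSC a ha (hab ▸ hb)⟩
        · intro a ha b hb hab
          subst hab
          rcases List.mem_append.1 hb with h | h
          · exact hA0S a ha h
          · exact hA0C a ha h
      -- membership facts in W
      have hTW : ∀ v ∈ T, v ∈ W := by
        intro v hv
        rw [hWsplit]
        exact List.mem_append_right _ (List.mem_cons_of_mem _ hv)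
      have hSne : S ≠ [] := by
        intro h
        rw [h] at hShead
        simp at hShead
      refine ⟨A0 ++ (S ++ C), ?_, hndW', ?_, ?_, ?_, ?_, ?_, ?_⟩
      · -- nonempty
        intro h
        have h1 := List.append_eq_nil_iff.1 h
        have h2 := List.append_eq_nil_iff.1 h1.2
        exact hSne h2.1
      · -- head?
        rw [← hW, List.head?_append, List.head?_append, hShead,
          List.head?_append, List.head?_eq_head hD0ne, ← hxdef, Option.some_or]
      · -- getLast?
        rcases eq_or_ne T [] with hT | hT
        · have hCl : C.getLast? = none := by rw [hClast, hT]; rfl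
          rw [List.getLast?_append, List.getLast?_append, hCl, hSlast,
            Option.none_or, Option.some_or, hWsplit, hT, List.getLast?_append]
          simp
        · obtain ⟨t, ht⟩ : ∃ t, T.getLast? = some t :=
            ⟨_, List.getLast?_eq_getLast hT⟩
          rw [List.getLast?_append, List.getLast?_append, hClast, ht,
            Option.some_or, Option.some_or, hWsplit, List.getLast?_append,
            getLast?_cons_of_ne_nil y hT, ht, Option.some_or]
      · -- vertices
        intro v hv
        rcases List.mem_append.1 hv with h | h
        · exact Or.inr ((List.takeWhile_prefix _).sublist.mem h)
        · rcases List.mem_append.1 h with h | h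
          · exact Or.inl (hSP v h)
          · rcases hCT v h with h' | h'
            · exact Or.inl h'
            · exact Or.inr (hTW v h')
      · -- edges
        intro e he
        rcases pairs_append he with h | h | h
        · exact Or.inr (pairs_infix (List.takeWhile_prefix _).isInfix h)
        · rcases pairs_append h with h' | h' | h'
          · exact Or.inl (pairs_infix (seg_infix P x y) h')
          · rcases hCedges e h' with h'' | h''
            · exact Or.inl h''
            · refine Or.inr (pairs_infix ?_ h'')
              refine (List.IsSuffix.isInfix ⟨A0 ++ W1 ++ [y], ?_⟩)
              rw [hWsplit]
              simp
          · -- junction between S and C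
            obtain ⟨h1, h2⟩ := h'
            rw [hSlast] at h1
            rw [hChead] at h2
            right
            have he2 : e = (y, e.2) := by
              rw [Prod.ext_iff]
              simp only [Option.some.injEq] at h1
              exact ⟨h1.symm, rfl⟩
            rw [he2]
            rw [hWsplit, show A0 ++ W1 ++ y :: T = (A0 ++ W1 ++ [y]) ++ T by simp]
            exact pairs_junction (by simp) h2
        · -- junction between A0 and S ++ C
          obtain ⟨h1, h2⟩ := h
          have h2' : e.2 = x := by
            rw [List.head?_append, hShead, Option.some_or] at h2
            simpa using h2.symm
          right
          have : e = (e.1, x) := by rw [Prod.ext_iff]; exact ⟨rfl, h2'⟩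
          rw [this, ← hW]
          exact pairs_junction h1 (List.head?_eq_head hD0ne)
      · -- bound
        intro v hv hvP
        rcases List.mem_append.1 hv with h | h
        · exact absurd hvP (hA0P v h)
        · rcases List.mem_append.1 h with h | h
          · exact ⟨y, hyW, hyP, (hSidx v h).2⟩
          · obtain ⟨w, hwT, hwP, hle⟩ := hCbound v h hvP
            exact ⟨w, hTW w hwT, hwP, hle⟩
      · -- laced
        exact glue hPnd A0 C hxP hyP hxy hndW' hA0P hCP_lt hCLaced

end LacedAux

end LacedMain
/-- Let `D` be a directed graph, let `P` be a directed path
in `D`, and let `Q` be a directed `a`–`b` path in `D`.  Then there exists a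
directed `a`–`b` path `Q'` in `D` with `Q' ⊆ P ∪ Q` such that `P` and `Q'`
are laced. -/
theorem exists_laced_path {V : Type u} [DecidableEq V] (D : DGraph V)
    (P : List V) (hP : DGraph.IsPath D P) (a b : V) (Q : List V)
    (hQ : DGraph.IsPathFrom D a b Q) :
    ∃ Q' : List V, DGraph.IsPathFrom D a b Q' ∧
      DGraph.ofList Q' ⊆ DGraph.ofList P ∪ DGraph.ofList Q ∧
      DGraph.Laced P Q' := by
  obtain ⟨hQpath, hQhead, hQlast⟩ := hQ
  obtain ⟨hQne, hQnd, hQverts, hQedges⟩ := hQpath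
  obtain ⟨hPne, hPnd, hPverts, hPedges⟩ := hP
  obtain ⟨Q', hne, hnd, hhead, hlast, hverts, hedges, hbound, hlaced⟩ :=
    LacedAux.main P hPnd Q.length Q le_rfl hQne hQnd
  refine ⟨Q', ⟨⟨hne, hnd, ?_, ?_⟩, by rw [hhead, hQhead], by rw [hlast, hQlast]⟩,
    ⟨?_, ?_⟩, hlaced⟩
  · intro v hv
    rcases hverts v hv with h | h
    · exact hPverts v h
    · exact hQverts v h
  · intro e he
    rcases hedges e he with h | h
    · exact hPedges e h
    · exact hQedges e h
  · intro v hv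
    rcases hverts v hv with h | h
    · exact Or.inl h
    · exact Or.inr h
  · intro e he
    rcases hedges e he with h | h
    · exact Or.inl h
    · exact Or.inr h
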